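/- For any Banach spaces X and Y, the numerical index of the injective tensor product satisfies n(X ⊗̂_ε Y) ≤ min{ n(X), n(Y) }. -/

import Mathlib

open Metric Set

/-- The numerical radius of a bounded linear operator `T` on a normed space `X` over `𝕜`:
`v(T) = sup { ‖x*(Tx)‖ : x ∈ S_X, x* ∈ S_{X*}, x*(x) = 1 }`. -/
noncomputable def numRadius (𝕜 : Type*) [RCLike 𝕜] {X : Type*} [NormedAddCommGroup X]
    [NormedSpace 𝕜 X] (T : X →L[𝕜] X) : ℝ :=
  sSup {r : ℝ | ∃ (x : X) (f : X →L[𝕜] 𝕜), ‖x‖ = 1 ∧ ‖f‖ = 1 ∧ f x = 1 ∧ r = ‖f (T x)‖}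

/-- The numerical index of a normed space: `n(X) = inf { v(T) : T ∈ L(X), ‖T‖ = 1 }`. -/
noncomputable def numIndex (𝕜 : Type*) [RCLike 𝕜] (X : Type*) [NormedAddCommGroup X]
    [NormedSpace 𝕜 X] : ℝ :=
  sInf {r : ℝ | ∃ T : X →L[𝕜] X, ‖T‖ = 1 ∧ r = numRadius 𝕜 T}

/-- `v_δ(T)` computed with points taken in `A ⊆ B_X` and functionals in `B ⊆ B_{X*}`. -/
noncomputable def numRadiusDeltaOn (𝕜 : Type*) [RCLike 𝕜] {X : Type*} [NormedAddCommGroup X]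
    [NormedSpace 𝕜 X] (T : X →L[𝕜] X) (A : Set X) (B : Set (X →L[𝕜] 𝕜)) (δ : ℝ) : ℝ :=
  sSup {r : ℝ | ∃ x ∈ A, ∃ f ∈ B, 1 - δ < RCLike.re (f x) ∧ r = ‖f (T x)‖}

/-- `Z` (together with the bounded bilinear map `t`) is the projective tensor product
`X ⊗̂_π Y`: it is complete, elementary tensors have norm `‖x‖‖y‖`, and the closed unit
ball of `Z` is the closed convex hull of `B_X ⊗ B_Y`. -/
structure IsProjectiveTensorProduct (𝕜 : Type*) [RCLike 𝕜] {X Y Z : Type*}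
    [NormedAddCommGroup X] [NormedSpace 𝕜 X] [NormedAddCommGroup Y] [NormedSpace 𝕜 Y]
    [NormedAddCommGroup Z] [NormedSpace 𝕜 Z] [NormedSpace ℝ Z] [IsScalarTower ℝ 𝕜 Z]
    (t : X →L[𝕜] Y →L[𝕜] Z) : Prop where
  complete : CompleteSpace Z
  norm_tmul : ∀ x y, ‖t x y‖ = ‖x‖ * ‖y‖
  ball_eq : closedBall (0 : Z) 1 = closure (convexHull ℝ
      {z : Z | ∃ x ∈ closedBall (0 : X) 1, ∃ y ∈ closedBall (0 : Y) 1, z = t x y})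

/-- `Z` (together with the bounded bilinear map `t`) is the injective tensor product
`X ⊗̂_ε Y`: it is complete, the span of elementary tensors is dense, and on that span
the norm is the injective tensor norm. -/
structure IsInjectiveTensorProduct (𝕜 : Type*) [RCLike 𝕜] {X Y Z : Type*}
    [NormedAddCommGroup X] [NormedSpace 𝕜 X] [NormedAddCommGroup Y] [NormedSpace 𝕜 Y]
    [NormedAddCommGroup Z] [NormedSpace 𝕜 Z] (t : X →L[𝕜] Y →L[𝕜] Z) : Prop where
  complete : CompleteSpace Z
  dense_span : Dense (Submodule.span 𝕜 {z : Z | ∃ x y, z = t x y} : Set Z)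
  norm_sum : ∀ (n : ℕ) (x : Fin n → X) (y : Fin n → Y),
    ‖∑ i, t (x i) (y i)‖ = sSup {r : ℝ | ∃ (f : X →L[𝕜] 𝕜) (g : Y →L[𝕜] 𝕜),
      ‖f‖ ≤ 1 ∧ ‖g‖ ≤ 1 ∧ r = ‖∑ i, f (x i) * g (y i)‖}

/-- A slice of a bounded set `A`: `{a ∈ A : Re f(a) > sup Re f(A) - δ}`. -/
def sliceOf (𝕜 : Type*) [RCLike 𝕜] {X : Type*} [NormedAddCommGroup X] [NormedSpace 𝕜 X]
    (A : Set X) (f : X →L[𝕜] 𝕜) (δ : ℝ) : Set X :=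
  {a ∈ A | sSup {r : ℝ | ∃ b ∈ A, r = RCLike.re (f b)} - δ < RCLike.re (f a)}

/-- A set `A` is slicely countably determined (SCD) if there is a countable determining
family of slices of `A`: any `B ⊆ A` meeting every slice of the family has
closed convex hull containing `A`. -/
def IsSCD (𝕜 : Type*) [RCLike 𝕜] {X : Type*} [NormedAddCommGroup X] [NormedSpace 𝕜 X]
    [NormedSpace ℝ X] [IsScalarTower ℝ 𝕜 X] (A : Set X) : Prop :=
  ∃ V : ℕ → Set X, (∀ n, ∃ (f : X →L[𝕜] 𝕜) (δ : ℝ), 0 < δ ∧ V n = sliceOf 𝕜 A f δ) ∧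
    ∀ B ⊆ A, (∀ n, (B ∩ V n).Nonempty) → A ⊆ closure (convexHull ℝ B)

/-- The Daugavet property: `‖Id + T‖ = 1 + ‖T‖` for every rank-one operator `T`. -/
def DaugavetProperty (𝕜 : Type*) [RCLike 𝕜] (X : Type*) [NormedAddCommGroup X]
    [NormedSpace 𝕜 X] : Prop :=
  ∀ T : X →L[𝕜] X, (∃ (f : X →L[𝕜] 𝕜) (x₀ : X), ∀ x, T x = f x • x₀) →
    ‖ContinuousLinearMap.id 𝕜 X + T‖ = 1 + ‖T‖
namespace ITPAux
section One


variable {𝕜 X : Type*} [RCLike 𝕜] [NormedAddCommGroup X] [NormedSpace 𝕜 X]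

lemma numRadius_nonneg (T : X →L[𝕜] X) : 0 ≤ numRadius 𝕜 T :=
  Real.sSup_nonneg (by rintro r ⟨x, f, _, _, _, rfl⟩; positivity)

lemma numRadius_bddAbove (T : X →L[𝕜] X) :
    BddAbove {r : ℝ | ∃ (x : X) (f : X →L[𝕜] 𝕜), ‖x‖ = 1 ∧ ‖f‖ = 1 ∧ f x = 1 ∧ r = ‖f (T x)‖} := by
  refine ⟨‖T‖, ?_⟩
  rintro r ⟨x, f, hx, hf, hfx, rfl⟩
  calc ‖f (T x)‖ ≤ ‖f‖ * ‖T x‖ := f.le_opNorm _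
    _ ≤ 1 * (‖T‖ * ‖x‖) := by rw [hf]; exact mul_le_mul_of_nonneg_left (T.le_opNorm x) one_pos.le
    _ = ‖T‖ := by rw [hx]; ring

lemma numRadius_le_norm (T : X →L[𝕜] X) : numRadius 𝕜 T ≤ ‖T‖ := by
  refine Real.sSup_le ?_ (norm_nonneg _)
  rintro r ⟨x, f, hx, hf, hfx, rfl⟩
  calc ‖f (T x)‖ ≤ ‖f‖ * ‖T x‖ := f.le_opNorm _
    _ ≤ 1 * (‖T‖ * ‖x‖) := by rw [hf]; exact mul_le_mul_of_nonneg_left (T.le_opNorm x) one_pos.le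
    _ = ‖T‖ := by rw [hx]; ring

lemma le_numRadius (T : X →L[𝕜] X) {x : X} {f : X →L[𝕜] 𝕜} (hx : ‖x‖ = 1) (hf : ‖f‖ = 1)
    (hfx : f x = 1) : ‖f (T x)‖ ≤ numRadius 𝕜 T :=
  le_csSup (numRadius_bddAbove T) ⟨x, f, hx, hf, hfx, rfl⟩

lemma numIndex_nonneg (𝕜 : Type*) [RCLike 𝕜] (X : Type*) [NormedAddCommGroup X]
    [NormedSpace 𝕜 X] : 0 ≤ numIndex 𝕜 X :=
  Real.sInf_nonneg (by rintro r ⟨T, _, rfl⟩; exact numRadius_nonneg T)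

lemma numIndex_eq_zero_of_subsingleton {Z : Type*} [NormedAddCommGroup Z] [NormedSpace 𝕜 Z]
    (hZ : Subsingleton Z) : numIndex 𝕜 Z = 0 := by
  have : {r : ℝ | ∃ T : Z →L[𝕜] Z, ‖T‖ = 1 ∧ r = numRadius 𝕜 T} = ∅ := by
    rw [Set.eq_empty_iff_forall_notMem]
    rintro r ⟨T, hT, -⟩
    have : T = 0 := by ext z; exact (hZ.elim _ _)
    rw [this, norm_zero] at hT
    exact one_ne_zero hT.symm
  rw [numIndex, this, Real.sInf_empty]

/-- Resolvent bound: `‖1 + (s u) • S‖ ≤ (1 + s²)/(1 - s v(S))`. -/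
lemma norm_one_add_smul_le [CompleteSpace X] (S : X →L[𝕜] X) (hS : ‖S‖ = 1)
    (u : 𝕜) (hu : ‖u‖ = 1) {s : ℝ} (hs : 0 < s) (hs2 : s ≤ 1/2) :
    ‖(1 : X →L[𝕜] X) + ((s : 𝕜) * u) • S‖ ≤ (1 + s^2) / (1 - s * numRadius 𝕜 S) := by
  set v := numRadius 𝕜 S with hv
  have hv0 : 0 ≤ v := numRadius_nonneg S
  have hv1 : v ≤ 1 := (numRadius_le_norm S).trans_eq hS
  have hsv : (0:ℝ) < 1 - s * v := by nlinarith
  set lam : 𝕜 := (s : 𝕜) * u with hlam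
  have hlamn : ‖lam‖ = s := by
    rw [hlam, norm_mul, RCLike.norm_ofReal, hu, abs_of_pos hs, mul_one]
  set c : X →L[𝕜] X := lam • S with hcdef
  have hc : ‖c‖ = s := by
    rw [hcdef]
    exact (norm_smul lam S).trans (by rw [hlamn, hS, mul_one])
  have hclt : ‖c‖ < 1 := by rw [hc]; linarith
  -- lower bound for 1 - c
  have hlow : ∀ x : X, (1 - s * v) * ‖x‖ ≤ ‖x - c x‖ := by
    intro x
    rcases eq_or_ne x 0 with rfl | hx0
    · simp
    · obtain ⟨f, hf1, hfx⟩ := exists_dual_vector 𝕜 x (norm_ne_zero_iff.mpr hx0)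
      have hxn : (0:ℝ) < ‖x‖ := norm_pos_iff.mpr hx0
      have hxne : (‖x‖ : 𝕜) ≠ 0 := RCLike.ofReal_ne_zero.mpr hxn.ne'
      set xh : X := (‖x‖ : 𝕜)⁻¹ • x with hxh
      have hxh1 : ‖xh‖ = 1 := by
        rw [hxh, norm_smul, norm_inv, RCLike.norm_ofReal, abs_of_pos hxn, inv_mul_cancel₀ hxn.ne']
      have hfxh : f xh = 1 := by
        rw [hxh, map_smul, hfx, smul_eq_mul, inv_mul_cancel₀ hxne]
      have hbnd : ‖f (S xh)‖ ≤ v := le_numRadius S hxh1 hf1 hfxh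
      have hfSx : ‖f (S x)‖ ≤ v * ‖x‖ := by
        have hxeq : x = (‖x‖ : 𝕜) • xh := by
          rw [hxh, smul_smul, mul_inv_cancel₀ hxne, one_smul]
        calc ‖f (S x)‖ = ‖x‖ * ‖f (S xh)‖ := by
              conv_lhs => rw [hxeq]
              rw [map_smul, map_smul, smul_eq_mul, norm_mul, RCLike.norm_ofReal, abs_of_pos hxn]
          _ ≤ ‖x‖ * v := by exact mul_le_mul_of_nonneg_left hbnd hxn.le
          _ = v * ‖x‖ := mul_comm _ _
      have hre : RCLike.re (f (x - c x)) ≤ ‖x - c x‖ :=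
        (RCLike.re_le_norm _).trans (by
          calc ‖f (x - c x)‖ ≤ ‖f‖ * ‖x - c x‖ := f.le_opNorm _
            _ = ‖x - c x‖ := by rw [hf1, one_mul])
      have hfe : RCLike.re (f (x - c x)) = ‖x‖ - RCLike.re (lam * f (S x)) := by
        rw [map_sub]
        have : f (c x) = lam * f (S x) := by
          rw [hcdef]; simp [smul_eq_mul]
        rw [this, map_sub, hfx]
        simp
      have hre2 : RCLike.re (lam * f (S x)) ≤ s * (v * ‖x‖) := by
        calc RCLike.re (lam * f (S x)) ≤ ‖lam * f (S x)‖ := RCLike.re_le_norm _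
          _ = s * ‖f (S x)‖ := by rw [norm_mul, hlamn]
          _ ≤ s * (v * ‖x‖) := mul_le_mul_of_nonneg_left hfSx hs.le
      nlinarith [hre, hfe, hre2]
  -- invertibility
  set W : (X →L[𝕜] X)ˣ := Units.oneSub c hclt with hW
  have hWval : (W : X →L[𝕜] X) = 1 - c := rfl
  have hWinv : ‖((W⁻¹ : (X →L[𝕜] X)ˣ) : X →L[𝕜] X)‖ ≤ (1 - s * v)⁻¹ := by
    refine ContinuousLinearMap.opNorm_le_bound _ (by positivity) fun y => ?_
    have h1 : (1 - s * v) * ‖((W⁻¹ : (X →L[𝕜] X)ˣ) : X →L[𝕜] X) y‖ ≤ ‖y‖ := by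
      have := hlow (((W⁻¹ : (X →L[𝕜] X)ˣ) : X →L[𝕜] X) y)
      refine this.trans ?_
      have : ((W⁻¹ : (X →L[𝕜] X)ˣ) : X →L[𝕜] X) y - c (((W⁻¹ : (X →L[𝕜] X)ˣ) : X →L[𝕜] X) y)
          = ((W : X →L[𝕜] X) * ((W⁻¹ : (X →L[𝕜] X)ˣ) : X →L[𝕜] X)) y := by
        rw [hWval]
        simp [ContinuousLinearMap.mul_apply, ContinuousLinearMap.sub_apply]
      rw [this, Units.mul_inv]
      simp
    rw [inv_mul_eq_div, le_div_iff₀ hsv, mul_comm]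
    exact h1
  -- the identity
  have hid : (1 : X →L[𝕜] X) + c = ((W⁻¹ : (X →L[𝕜] X)ˣ) : X →L[𝕜] X) * (1 - c * c) := by
    have h1 : (W : X →L[𝕜] X) * (1 + c) = 1 - c * c := by
      rw [hWval]; noncomm_ring
    calc (1 : X →L[𝕜] X) + c
        = (((W⁻¹ : (X →L[𝕜] X)ˣ) : X →L[𝕜] X) * (W : X →L[𝕜] X)) * (1 + c) := by
          rw [Units.inv_mul, one_mul]
      _ = ((W⁻¹ : (X →L[𝕜] X)ˣ) : X →L[𝕜] X) * (1 - c * c) := by rw [mul_assoc, h1]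
  calc ‖(1 : X →L[𝕜] X) + lam • S‖
      = ‖((W⁻¹ : (X →L[𝕜] X)ˣ) : X →L[𝕜] X) * (1 - c * c)‖ := by rw [← hid, hcdef]
    _ ≤ ‖((W⁻¹ : (X →L[𝕜] X)ˣ) : X →L[𝕜] X)‖ * ‖(1 : X →L[𝕜] X) - c * c‖ := norm_mul_le _ _
    _ ≤ (1 - s * v)⁻¹ * (1 + s^2) := by
        refine mul_le_mul hWinv ?_ (norm_nonneg _) (by positivity)
        calc ‖(1 : X →L[𝕜] X) - c * c‖ ≤ ‖(1 : X →L[𝕜] X)‖ + ‖c * c‖ := norm_sub_le _ _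
          _ ≤ 1 + s^2 := by
              have h1 : ‖(1 : X →L[𝕜] X)‖ ≤ 1 := by
                rw [ContinuousLinearMap.one_def]; exact ContinuousLinearMap.norm_id_le
              have h2 : ‖c * c‖ ≤ s^2 := by
                calc ‖c * c‖ ≤ ‖c‖ * ‖c‖ := norm_mul_le _ _
                  _ = s^2 := by rw [hc]; ring
              linarith
    _ = (1 + s^2) / (1 - s * v) := by rw [div_eq_mul_inv, mul_comm]

end One

section Two


open scoped TensorProduct

variable {𝕜 X Y Z : Type*} [RCLike 𝕜]
  [NormedAddCommGroup X] [NormedSpace 𝕜 X]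
  [NormedAddCommGroup Y] [NormedSpace 𝕜 Y]
  [NormedAddCommGroup Z] [NormedSpace 𝕜 Z]

lemma exists_fin_sum_of_mem_span (t : X →L[𝕜] Y →L[𝕜] Z) {z : Z}
    (hz : z ∈ Submodule.span 𝕜 {z : Z | ∃ x y, z = t x y}) :
    ∃ (n : ℕ) (x : Fin n → X) (y : Fin n → Y), z = ∑ i, t (x i) (y i) := by
  induction hz using Submodule.span_induction with
  | mem z hzm =>
      obtain ⟨x, y, rfl⟩ := hzm
      exact ⟨1, fun _ => x, fun _ => y, by simp⟩
  | zero => exact ⟨0, Fin.elim0, Fin.elim0, by simp⟩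
  | add a b ha hb iha ihb =>
      obtain ⟨n, x, y, rfl⟩ := iha
      obtain ⟨m, x', y', rfl⟩ := ihb
      refine ⟨n + m, Fin.append x x', Fin.append y y', ?_⟩
      rw [Fin.sum_univ_add]
      simp
  | smul a z hz ih =>
      obtain ⟨n, x, y, rfl⟩ := ih
      refine ⟨n, fun i => a • x i, y, ?_⟩
      rw [Finset.smul_sum]
      exact Finset.sum_congr rfl fun i _ => by rw [map_smul]; rfl

lemma exists_fin_sum_tensor (u : X ⊗[𝕜] Y) :
    ∃ (n : ℕ) (x : Fin n → X) (y : Fin n → Y), u = ∑ i, x i ⊗ₜ[𝕜] y i := by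
  induction u with
  | zero => exact ⟨0, Fin.elim0, Fin.elim0, by simp⟩
  | tmul x y => exact ⟨1, fun _ => x, fun _ => y, by simp⟩
  | add a b iha ihb =>
      obtain ⟨n, x, y, rfl⟩ := iha
      obtain ⟨m, x', y', rfl⟩ := ihb
      refine ⟨n + m, Fin.append x x', Fin.append y y', ?_⟩
      rw [Fin.sum_univ_add]
      simp

lemma sumSet_nonneg {n : ℕ} (x : Fin n → X) (y : Fin n → Y) :
    0 ≤ sSup {r : ℝ | ∃ (f : X →L[𝕜] 𝕜) (g : Y →L[𝕜] 𝕜),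
      ‖f‖ ≤ 1 ∧ ‖g‖ ≤ 1 ∧ r = ‖∑ i, f (x i) * g (y i)‖} :=
  Real.sSup_nonneg (by rintro r ⟨f, g, -, -, rfl⟩; positivity)

lemma sumSet_bddAbove {n : ℕ} (x : Fin n → X) (y : Fin n → Y) :
    BddAbove {r : ℝ | ∃ (f : X →L[𝕜] 𝕜) (g : Y →L[𝕜] 𝕜),
      ‖f‖ ≤ 1 ∧ ‖g‖ ≤ 1 ∧ r = ‖∑ i, f (x i) * g (y i)‖} := by
  refine ⟨∑ i, ‖x i‖ * ‖y i‖, ?_⟩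
  rintro r ⟨f, g, hf, hg, rfl⟩
  calc ‖∑ i, f (x i) * g (y i)‖ ≤ ∑ i, ‖f (x i) * g (y i)‖ := norm_sum_le _ _
    _ ≤ ∑ i, ‖x i‖ * ‖y i‖ := by
        refine Finset.sum_le_sum fun i _ => ?_
        rw [norm_mul]
        have h1 : ‖f (x i)‖ ≤ ‖x i‖ :=
          (f.le_opNorm _).trans (by nlinarith [norm_nonneg (x i), f.le_opNorm (x i)])
        have h2 : ‖g (y i)‖ ≤ ‖y i‖ :=
          (g.le_opNorm _).trans (by nlinarith [norm_nonneg (y i), g.le_opNorm (y i)])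
        exact mul_le_mul h1 h2 (norm_nonneg _) (norm_nonneg _)

lemma norm_sum_map_le {t : X →L[𝕜] Y →L[𝕜] Z} (ht : IsInjectiveTensorProduct 𝕜 t)
    (R : X →L[𝕜] X) (n : ℕ) (x : Fin n → X) (y : Fin n → Y) :
    ‖∑ i, t (R (x i)) (y i)‖ ≤ ‖R‖ * ‖∑ i, t (x i) (y i)‖ := by
  rw [ht.norm_sum n (fun i => R (x i)) y, ht.norm_sum n x y]
  refine Real.sSup_le ?_ (mul_nonneg (norm_nonneg _) (sumSet_nonneg x y))
  rintro r ⟨f, g, hf, hg, rfl⟩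
  rcases eq_or_ne R 0 with rfl | hR
  · simp [sumSet_nonneg x y]
  · have hRn : (0:ℝ) < ‖R‖ := by
      rcases (norm_nonneg R).lt_or_eq with h | h
      · exact h
      · exact absurd (ContinuousLinearMap.opNorm_zero_iff R |>.mp h.symm) hR
    set f' : X →L[𝕜] 𝕜 := ((‖R‖ : 𝕜))⁻¹ • (f.comp R) with hf'def
    have hf' : ‖f'‖ ≤ 1 := by
      rw [hf'def]
      calc ‖((‖R‖ : 𝕜))⁻¹ • (f.comp R)‖ = ‖((‖R‖ : 𝕜))⁻¹‖ * ‖f.comp R‖ := norm_smul ((‖R‖ : 𝕜))⁻¹ (f.comp R)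
        _ ≤ ‖R‖⁻¹ * (‖f‖ * ‖R‖) := by
            rw [norm_inv, RCLike.norm_ofReal, abs_of_pos hRn]
            exact mul_le_mul_of_nonneg_left (f.opNorm_comp_le R) (by positivity)
        _ ≤ ‖R‖⁻¹ * (1 * ‖R‖) := by
            refine mul_le_mul_of_nonneg_left ?_ (by positivity)
            exact mul_le_mul_of_nonneg_right hf (norm_nonneg _)
        _ = 1 := by field_simp
    have hsum : ∑ i, f (R (x i)) * g (y i) = (‖R‖ : 𝕜) * ∑ i, f' (x i) * g (y i) := by
      rw [Finset.mul_sum]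
      refine Finset.sum_congr rfl fun i _ => ?_
      rw [hf'def]
      simp only [ContinuousLinearMap.smul_apply, ContinuousLinearMap.comp_apply, smul_eq_mul]
      have : ((‖R‖ : 𝕜)) ≠ 0 := RCLike.ofReal_ne_zero.mpr hRn.ne'
      field_simp
    rw [hsum, norm_mul, RCLike.norm_ofReal, abs_of_pos hRn]
    exact mul_le_mul_of_nonneg_left
      (le_csSup (sumSet_bddAbove x y) ⟨f', g, hf', hg, rfl⟩) hRn.le

lemma itp_norm_tmul {t : X →L[𝕜] Y →L[𝕜] Z} (ht : IsInjectiveTensorProduct 𝕜 t)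
    (x : X) (y : Y) : ‖t x y‖ = ‖x‖ * ‖y‖ := by
  rcases eq_or_ne x 0 with rfl | hx; · simp
  rcases eq_or_ne y 0 with rfl | hy; · simp
  have h := ht.norm_sum 1 (fun _ => x) (fun _ => y)
  simp only [Fin.sum_univ_one] at h
  rw [h]
  apply le_antisymm
  · refine Real.sSup_le ?_ (by positivity)
    rintro r ⟨f, g, hf, hg, rfl⟩
    rw [norm_mul]
    have h1 : ‖f x‖ ≤ ‖x‖ :=
      (f.le_opNorm _).trans (by nlinarith [norm_nonneg x, f.le_opNorm x])
    have h2 : ‖g y‖ ≤ ‖y‖ :=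
      (g.le_opNorm _).trans (by nlinarith [norm_nonneg y, g.le_opNorm y])
    exact mul_le_mul h1 h2 (norm_nonneg _) (norm_nonneg _)
  · obtain ⟨f, hf1, hfx⟩ := exists_dual_vector 𝕜 x (norm_ne_zero_iff.mpr hx)
    obtain ⟨g, hg1, hgy⟩ := exists_dual_vector 𝕜 y (norm_ne_zero_iff.mpr hy)
    refine le_csSup ⟨‖x‖ * ‖y‖, ?_⟩ ⟨f, g, hf1.le, hg1.le, ?_⟩
    · rintro r ⟨f', g', hf', hg', rfl⟩
      rw [norm_mul]
      have h1 : ‖f' x‖ ≤ ‖x‖ :=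
        (f'.le_opNorm _).trans (by nlinarith [norm_nonneg x, f'.le_opNorm x])
      have h2 : ‖g' y‖ ≤ ‖y‖ :=
        (g'.le_opNorm _).trans (by nlinarith [norm_nonneg y, g'.le_opNorm y])
      exact mul_le_mul h1 h2 (norm_nonneg _) (norm_nonneg _)
    · rw [hfx, hgy, norm_mul, RCLike.norm_ofReal, RCLike.norm_ofReal,
        abs_of_nonneg (norm_nonneg x), abs_of_nonneg (norm_nonneg y)]

lemma exists_op {t : X →L[𝕜] Y →L[𝕜] Z} (ht : IsInjectiveTensorProduct 𝕜 t)
    (R : X →L[𝕜] X) :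
    ∃ T : Z →L[𝕜] Z, ‖T‖ ≤ ‖R‖ ∧ ∀ x y, T (t x y) = t (R x) y := by
  haveI : CompleteSpace Z := ht.complete
  -- bilinear lift on the algebraic tensor product
  let B : (X →L[𝕜] X) → (X ⊗[𝕜] Y →ₗ[𝕜] Z) := fun R' =>
    TensorProduct.lift ((ContinuousLinearMap.coeLM 𝕜).comp (t.comp R').toLinearMap)
  have hBtmul : ∀ (R' : X →L[𝕜] X) (x : X) (y : Y), B R' (x ⊗ₜ[𝕜] y) = t (R' x) y := by
    intro R' x y
    simp [B, TensorProduct.lift.tmul]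
  set J : X ⊗[𝕜] Y →ₗ[𝕜] Z := B (ContinuousLinearMap.id 𝕜 X) with hJ
  have hJtmul : ∀ (x : X) (y : Y), J (x ⊗ₜ[𝕜] y) = t x y := by
    intro x y; rw [hJ, hBtmul]; rfl
  have key : ∀ u : X ⊗[𝕜] Y, ‖B R u‖ ≤ ‖R‖ * ‖J u‖ := by
    intro u
    obtain ⟨n, x, y, rfl⟩ := exists_fin_sum_tensor u
    rw [map_sum, map_sum]
    simp only [hBtmul, hJtmul]
    exact norm_sum_map_le ht R n x y
  have hker : LinearMap.ker J ≤ LinearMap.ker (B R) := by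
    intro u hu
    rw [LinearMap.mem_ker] at hu ⊢
    have := key u
    rw [hu, norm_zero, mul_zero] at this
    exact norm_le_zero_iff.mp this
  set D : Submodule 𝕜 Z := Submodule.span 𝕜 {z : Z | ∃ x y, z = t x y} with hD
  have hDr : D = LinearMap.range J := by
    apply le_antisymm
    · rw [hD, Submodule.span_le]
      rintro z ⟨x, y, rfl⟩
      exact ⟨x ⊗ₜ[𝕜] y, hJtmul x y⟩
    · rintro z ⟨u, rfl⟩
      obtain ⟨n, x, y, rfl⟩ := exists_fin_sum_tensor u
      rw [map_sum]
      simp only [hJtmul]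
      exact Submodule.sum_mem _ fun i _ => Submodule.subset_span ⟨x i, y i, rfl⟩
  set lin : D →ₗ[𝕜] Z :=
    ((LinearMap.ker J).liftQ (B R) hker).comp
      ((J.quotKerEquivRange.symm.toLinearMap).comp
        (LinearEquiv.ofEq D (LinearMap.range J) hDr).toLinearMap) with hlin0
  have hlin : ∀ (u : X ⊗[𝕜] Y) (h : J u ∈ D), lin ⟨J u, h⟩ = B R u := by
    intro u h
    have h' : J u ∈ LinearMap.range J := ⟨u, rfl⟩
    have e1 : (LinearEquiv.ofEq D (LinearMap.range J) hDr) ⟨J u, h⟩ = ⟨J u, h'⟩ := rfl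
    rw [hlin0]
    simp only [LinearMap.comp_apply, LinearEquiv.coe_toLinearMap, e1,
      LinearMap.quotKerEquivRange_symm_apply_image, Submodule.mkQ_apply,
      Submodule.liftQ_apply]
  have hbound : ∀ d : D, ‖lin d‖ ≤ ‖R‖ * ‖d‖ := by
    intro d
    obtain ⟨u, hu⟩ := hDr.le d.2
    have hd : d = ⟨J u, hu.symm ▸ d.2⟩ := Subtype.ext hu.symm
    rw [hd, hlin u _]
    have h2 : ‖(⟨J u, hu.symm ▸ d.2⟩ : D)‖ = ‖J u‖ := rfl
    rw [h2]
    exact key u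
  set T₀ : D →L[𝕜] Z := LinearMap.mkContinuous lin ‖R‖ hbound with hT₀
  set e : D →L[𝕜] Z := D.subtypeL with he
  have h_e : ∀ d : D, ‖d‖ ≤ ((1 : NNReal) : ℝ) * ‖e d‖ := by
    intro d
    rw [NNReal.coe_one, one_mul]
    rfl
  have hd : DenseRange e := by
    have hcoe : Set.range e = (D : Set Z) := Subtype.range_coe
    rw [DenseRange, hcoe]
    exact ht.dense_span
  refine ⟨T₀.extend e,
    ?_, ?_⟩
  · have h1 := T₀.opNorm_extend_le hd h_e
    have h2 : ‖T₀‖ ≤ ‖R‖ := LinearMap.mkContinuous_norm_le lin (norm_nonneg R) hbound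
    calc ‖T₀.extend e‖ ≤ ((1 : NNReal) : ℝ) * ‖T₀‖ := h1
      _ = ‖T₀‖ := by rw [NNReal.coe_one, one_mul]
      _ ≤ ‖R‖ := h2
  · intro x y
    have hmem : t x y ∈ D := Submodule.subset_span ⟨x, y, rfl⟩
    have h1 : t x y = e ⟨t x y, hmem⟩ := rfl
    rw [h1, ContinuousLinearMap.extend_eq T₀ hd (e.isUniformEmbedding_of_bound h_e).isUniformInducing]
    show lin ⟨t x y, hmem⟩ = t (R x) y
    have hmem' : J (x ⊗ₜ[𝕜] y) ∈ D := by rw [hJtmul]; exact hmem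
    have h2 : (⟨t x y, hmem⟩ : D) = ⟨J (x ⊗ₜ[𝕜] y), hmem'⟩ := Subtype.ext (hJtmul x y).symm
    rw [h2, hlin, hBtmul]

lemma subsingleton_of_left {t : X →L[𝕜] Y →L[𝕜] Z} (ht : IsInjectiveTensorProduct 𝕜 t)
    (hX : Subsingleton X) : Subsingleton Z := by
  have hset : {z : Z | ∃ x y, z = t x y} ⊆ {0} := by
    rintro z ⟨x, y, rfl⟩
    have hx : x = (0 : X) := Subsingleton.elim _ _
    simp [hx]
  have h1 : Submodule.span 𝕜 {z : Z | ∃ x y, z = t x y} ≤ ⊥ :=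
    Submodule.span_le.mpr fun z hz => by simpa [Submodule.mem_bot] using hset hz
  have h2 : Submodule.span 𝕜 {z : Z | ∃ x y, z = t x y} = ⊥ := le_bot_iff.mp h1
  have hd : Dense ({0} : Set Z) := by
    have := ht.dense_span
    rw [h2] at this
    simpa [Submodule.bot_coe] using this
  have h3 : closure ({0} : Set Z) = univ := hd.closure_eq
  rw [closure_singleton] at h3
  refine ⟨fun a b => ?_⟩
  have ha : a ∈ ({0} : Set Z) := h3 ▸ mem_univ a
  have hb : b ∈ ({0} : Set Z) := h3 ▸ mem_univ b
  rw [mem_singleton_iff] at ha hb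
  rw [ha, hb]

lemma subsingleton_of_right {t : X →L[𝕜] Y →L[𝕜] Z} (ht : IsInjectiveTensorProduct 𝕜 t)
    (hY : Subsingleton Y) : Subsingleton Z := by
  have hset : {z : Z | ∃ x y, z = t x y} ⊆ {0} := by
    rintro z ⟨x, y, rfl⟩
    have hy : y = (0 : Y) := Subsingleton.elim _ _
    simp [hy]
  have h1 : Submodule.span 𝕜 {z : Z | ∃ x y, z = t x y} ≤ ⊥ :=
    Submodule.span_le.mpr fun z hz => by simpa [Submodule.mem_bot] using hset hz
  have h2 : Submodule.span 𝕜 {z : Z | ∃ x y, z = t x y} = ⊥ := le_bot_iff.mp h1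
  have hd : Dense ({0} : Set Z) := by
    have := ht.dense_span
    rw [h2] at this
    simpa [Submodule.bot_coe] using this
  have h3 : closure ({0} : Set Z) = univ := hd.closure_eq
  rw [closure_singleton] at h3
  refine ⟨fun a b => ?_⟩
  have ha : a ∈ ({0} : Set Z) := h3 ▸ mem_univ a
  have hb : b ∈ ({0} : Set Z) := h3 ▸ mem_univ b
  rw [mem_singleton_iff] at ha hb
  rw [ha, hb]

lemma itp_flip {t : X →L[𝕜] Y →L[𝕜] Z} (ht : IsInjectiveTensorProduct 𝕜 t) :
    IsInjectiveTensorProduct 𝕜 t.flip := by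
  have hsets : {z : Z | ∃ y x, z = t.flip y x} = {z : Z | ∃ x y, z = t x y} := by
    ext z
    constructor
    · rintro ⟨y, x, rfl⟩; exact ⟨x, y, by rw [ContinuousLinearMap.flip_apply]⟩
    · rintro ⟨x, y, rfl⟩; exact ⟨y, x, by rw [ContinuousLinearMap.flip_apply]⟩
  refine ⟨ht.complete, ?_, ?_⟩
  · rw [show {z : Z | ∃ y x, z = t.flip y x} = {z : Z | ∃ x y, z = t x y} from hsets]
    exact ht.dense_span
  · intro n y x
    calc ‖∑ i, t.flip (y i) (x i)‖ = ‖∑ i, t (x i) (y i)‖ := by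
          simp [ContinuousLinearMap.flip_apply]
      _ = _ := by
          rw [ht.norm_sum n x y]
          congr 1
          ext r
          constructor
          · rintro ⟨f, g, hf, hg, rfl⟩
            exact ⟨g, f, hg, hf, by simp [mul_comm]⟩
          · rintro ⟨g, f, hg, hf, rfl⟩
            exact ⟨f, g, hf, hg, by simp [mul_comm]⟩

lemma numIndex_le_left [CompleteSpace X] (t : X →L[𝕜] Y →L[𝕜] Z)
    (ht : IsInjectiveTensorProduct 𝕜 t) : numIndex 𝕜 Z ≤ numIndex 𝕜 X := by
  by_cases hZ : Subsingleton Z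
  · rw [numIndex_eq_zero_of_subsingleton hZ]
    exact numIndex_nonneg 𝕜 X
  · have hXn : Nontrivial X := by
      rcases subsingleton_or_nontrivial X with h | h
      · exact absurd (subsingleton_of_left ht h) hZ
      · exact h
    have hYn : Nontrivial Y := by
      rcases subsingleton_or_nontrivial Y with h | h
      · exact absurd (subsingleton_of_right ht h) hZ
      · exact h
    refine le_csInf ⟨numRadius 𝕜 (ContinuousLinearMap.id 𝕜 X),
      ContinuousLinearMap.id 𝕜 X, ContinuousLinearMap.norm_id, rfl⟩ ?_
    rintro r ⟨S, hS, rfl⟩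
    obtain ⟨T, hTle, hTapp⟩ := exists_op ht S
    -- a unit vector in Y
    obtain ⟨y₀, hy₀⟩ := exists_ne (0 : Y)
    have hy₀n : (0:ℝ) < ‖y₀‖ := norm_pos_iff.mpr hy₀
    set y₁ : Y := ((‖y₀‖ : 𝕜))⁻¹ • y₀ with hy₁def
    have hy₁ : ‖y₁‖ = 1 := by
      rw [hy₁def, norm_smul, norm_inv, RCLike.norm_ofReal, abs_of_pos hy₀n,
        inv_mul_cancel₀ hy₀n.ne']
    have hT1 : ‖T‖ = 1 := by
      refine le_antisymm (hTle.trans_eq hS) ?_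
      rw [← hS]
      refine S.opNorm_le_bound (norm_nonneg T) fun x => ?_
      have h1 := T.le_opNorm (t x y₁)
      rw [hTapp, itp_norm_tmul ht, itp_norm_tmul ht, hy₁, mul_one, mul_one] at h1
      exact h1
    -- numerical radius comparison
    set v := numRadius 𝕜 S with hv
    have hv0 : 0 ≤ v := numRadius_nonneg S
    have hv1 : v ≤ 1 := (numRadius_le_norm S).trans_eq hS
    have hrad : numRadius 𝕜 T ≤ v := by
      refine le_of_forall_pos_le_add fun ε hε => ?_
      set s : ℝ := min (ε / 4) (1 / 2) with hsdef
      have hs0 : 0 < s := lt_min (by linarith) (by norm_num)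
      have hs2 : s ≤ 1 / 2 := min_le_right _ _
      have hse : 4 * s ≤ ε := by
        have := min_le_left (ε / 4) (1 / 2)
        nlinarith
      have hsv : (0:ℝ) < 1 - s * v := by nlinarith
      have hsv2 : s * v ≤ 1 / 2 := by nlinarith
      suffices h : numRadius 𝕜 T ≤ v + 4 * s by linarith
      refine Real.sSup_le ?_ (by linarith)
      rintro r ⟨z, φ, hz, hφ, hφz, rfl⟩
      rcases eq_or_ne (φ (T z)) 0 with hc | hc
      · rw [hc, norm_zero]; linarith
      · set c : 𝕜 := φ (T z) with hcdef
        have hcn : (0:ℝ) < ‖c‖ := norm_pos_iff.mpr hc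
        set u : 𝕜 := (starRingEnd 𝕜) c * ((‖c‖ : 𝕜))⁻¹ with hudef
        have hu : ‖u‖ = 1 := by
          rw [hudef, norm_mul, norm_inv, RCLike.norm_conj, RCLike.norm_ofReal,
            abs_of_pos hcn, mul_inv_cancel₀ hcn.ne']
        set lam : 𝕜 := (s : 𝕜) * u with hlamdef
        have hluc : lam * c = ((s * ‖c‖ : ℝ) : 𝕜) := by
          have h2 : ((‖c‖ : ℝ) : 𝕜) ≠ 0 := RCLike.ofReal_ne_zero.mpr hcn.ne'
          calc lam * c = (s : 𝕜) * (((starRingEnd 𝕜) c * c) * ((‖c‖ : 𝕜))⁻¹) := by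
                rw [hlamdef, hudef]; ring
            _ = (s : 𝕜) * ((((‖c‖ : ℝ) : 𝕜)) ^ 2 * ((‖c‖ : 𝕜))⁻¹) := by
                rw [RCLike.conj_mul]
            _ = ((s * ‖c‖ : ℝ) : 𝕜) := by
                push_cast
                field_simp
        -- step 1
        have h1 : 1 + s * ‖c‖ ≤ ‖ContinuousLinearMap.id 𝕜 Z + lam • T‖ := by
          have e1 : φ ((ContinuousLinearMap.id 𝕜 Z + lam • T) z) = 1 + lam * c := by
            simp [ContinuousLinearMap.add_apply, ContinuousLinearMap.smul_apply,
              hφz, smul_eq_mul, hcdef]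
          calc 1 + s * ‖c‖ = RCLike.re ((1 : 𝕜) + lam * c) := by
                rw [hluc]
                simp
            _ = RCLike.re (φ ((ContinuousLinearMap.id 𝕜 Z + lam • T) z)) := by rw [e1]
            _ ≤ ‖φ ((ContinuousLinearMap.id 𝕜 Z + lam • T) z)‖ := RCLike.re_le_norm _
            _ ≤ ‖φ‖ * ‖(ContinuousLinearMap.id 𝕜 Z + lam • T) z‖ := φ.le_opNorm _
            _ ≤ 1 * (‖ContinuousLinearMap.id 𝕜 Z + lam • T‖ * ‖z‖) := by
                rw [hφ]
                exact mul_le_mul_of_nonneg_left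
                  ((ContinuousLinearMap.id 𝕜 Z + lam • T).le_opNorm z) one_pos.le
            _ = ‖ContinuousLinearMap.id 𝕜 Z + lam • T‖ := by rw [hz]; ring
        -- step 2
        have h2 : ‖ContinuousLinearMap.id 𝕜 Z + lam • T‖ ≤
            ‖ContinuousLinearMap.id 𝕜 X + lam • S‖ := by
          obtain ⟨T', hT'le, hT'app⟩ := exists_op ht (ContinuousLinearMap.id 𝕜 X + lam • S)
          have heq : ContinuousLinearMap.id 𝕜 Z + lam • T = T' := by
            refine (ContinuousLinearMap.ext_on ht.dense_span ?_).symm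
            rintro z' ⟨x, y, rfl⟩
            rw [hT'app]
            simp only [ContinuousLinearMap.add_apply, ContinuousLinearMap.smul_apply,
              ContinuousLinearMap.coe_id', id_eq, map_add, hTapp]
            rw [map_smul]
            rfl
          rw [heq]
          exact hT'le
        -- step 3
        have h3 : ‖ContinuousLinearMap.id 𝕜 X + lam • S‖ ≤ (1 + s ^ 2) / (1 - s * v) := by
          have := norm_one_add_smul_le S hS u hu hs0 hs2
          rw [ContinuousLinearMap.one_def] at this
          rw [← hv] at this
          exact this
        have hineq : 1 + s * ‖c‖ ≤ (1 + s ^ 2) / (1 - s * v) := (h1.trans h2).trans h3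
        rw [le_div_iff₀ hsv] at hineq
        have e1 : s * (‖c‖ * (1 - s * v)) ≤ s * (s + v) := by nlinarith [hineq]
        have e2 : ‖c‖ * (1 - s * v) ≤ s + v := le_of_mul_le_mul_left e1 hs0
        have e3 : s + v ≤ (v + 4 * s) * (1 - s * v) := by
          nlinarith [mul_nonneg (mul_nonneg hs0.le hv0) (sub_nonneg.mpr hv1),
            mul_le_mul_of_nonneg_left hsv2 (by positivity : (0:ℝ) ≤ 4 * s),
            mul_le_mul_of_nonneg_left hv1 hs0.le]
        exact (mul_le_mul_iff_of_pos_right hsv).mp (e2.trans e3)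
    calc numIndex 𝕜 Z ≤ numRadius 𝕜 T := by
          refine csInf_le ⟨0, ?_⟩ ⟨T, hT1, rfl⟩
          rintro r ⟨T', -, rfl⟩
          exact numRadius_nonneg T'
      _ ≤ v := hrad

end Two
end ITPAux

/-- `n(X ⊗̂_ε Y) ≤ min{n(X), n(Y)}`. -/
theorem numIndex_injectiveTensorProduct_le_min {𝕜 X Y Z : Type*} [RCLike 𝕜]
    [NormedAddCommGroup X] [NormedSpace 𝕜 X] [CompleteSpace X]
    [NormedAddCommGroup Y] [NormedSpace 𝕜 Y] [CompleteSpace Y]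
    [NormedAddCommGroup Z] [NormedSpace 𝕜 Z]
    (t : X →L[𝕜] Y →L[𝕜] Z) (ht : IsInjectiveTensorProduct 𝕜 t) :
    numIndex 𝕜 Z ≤ min (numIndex 𝕜 X) (numIndex 𝕜 Y) := by
  refine le_min (ITPAux.numIndex_le_left t ht) (ITPAux.numIndex_le_left t.flip (ITPAux.itp_flip ht))
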